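/- Let k be a field, a ∈ k, and let X, Y, Z ∈ k satisfy aX³ + Y³ + Z³ = XYZ (i.e., (X:Y:Z) lies on the twisted Hessian curve H). Then the point (X₀, Y₀, Z₀) = (aX³, Y³, Z³) satisfies X₀Y₀Z₀ = a(X₀ + Y₀ + Z₀)³, i.e., the map (X:Y:Z) ↦ (aX³:Y³:Z³) sends points of H to points of the quotient curve E: XYZ = a(X+Y+Z)³. -/
import Mathlib

/-- The map `(X:Y:Z) ↦ (aX³:Y³:Z³)` sends points of the twisted Hessian
curve `H : aX³ + Y³ + Z³ = XYZ` to points of the quotient curve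
`E : XYZ = a(X+Y+Z)³`. -/
theorem twistedHessian_quotient_isogeny {k : Type*} [Field k] (a : k)
    (X Y Z : k) (h : a * X ^ 3 + Y ^ 3 + Z ^ 3 = X * Y * Z) :
    (a * X ^ 3) * (Y ^ 3) * (Z ^ 3) =
      a * (a * X ^ 3 + Y ^ 3 + Z ^ 3) ^ 3 := by
  rw [h]; ring
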